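/- (Lemma 2, case (ii)) Let k ∈ ℝ and x ∈ [0,1). There exists n₀ ∈ ℕ such that for all n ≥ n₀ with x + r_n(x,k) ∈ [2/3, 5/3), Δ_n(x,k) = c_n(0,x) − ∫₀¹ c_n(v,x) dv + (x − 2/3)·((n+1+x)/(n+2) − c_n(0,x)) + ((n+1+x)/(n+2))·r_{n+1}(x,k) − c_n(0,x)·r_n(x,k). -/

import Mathlib

open MeasureTheory ProbabilityTheory Filter Real Set
open scoped ENNReal NNReal

/-- Distribution of `Z_λ = N_λ + U`, `N_λ` Poisson(λ), `U` uniform on `(0,1)`, independent. -/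
noncomputable def zMeasure (l : ℝ) : Measure ℝ :=
  Measure.map (fun p : ℝ × ℝ => p.1 + p.2)
    ((Measure.map (Nat.cast : ℕ → ℝ) (poissonMeasure l.toNNReal)).prod
      (volume.restrict (Set.Ioo (0 : ℝ) 1)))

/-- The median of `Z_λ`: `inf {t : P(Z_λ ≤ t) ≥ 1/2}`. -/
noncomputable def medianZ (l : ℝ) : ℝ :=
  sInf {t : ℝ | (1 : ℝ≥0∞) / 2 ≤ zMeasure l (Set.Iic t)}

/-- The function `H` of the main theorem. -/
noncomputable def Hfun (x : ℝ) : ℝ :=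
  if x ≤ 2 / 3 then x ^ 2 * (x - 1) / 3 + 4 / 135
  else x / 3 * (x ^ 2 - 4 * x + 5) - 86 / 135

/-- `w_n(x,k) = P(Z_{n+x} ≤ n + x + 1/3 + k/(n+x))`. -/
noncomputable def w (n : ℕ) (x k : ℝ) : ℝ :=
  (zMeasure (n + x) (Set.Iic ((n : ℝ) + x + 1 / 3 + k / (n + x)))).toReal

/-- `r_n(x,k) = k/(n+x)`. -/
noncomputable def r (n : ℕ) (x k : ℝ) : ℝ := k / (n + x)

/-- `g_n(u) = e^{-u} u^n`. -/
noncomputable def g (n : ℕ) (u : ℝ) : ℝ := Real.exp (-u) * u ^ n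

/-- `c_n(v,x) = ((n+v+x)/(n+1+x))^{n+1} e^{1-v}`. -/
noncomputable def c (n : ℕ) (v x : ℝ) : ℝ :=
  (((n : ℝ) + v + x) / ((n : ℝ) + 1 + x)) ^ (n + 1) * Real.exp (1 - v)

/-- `Δ_n(x,k) = ((n+1)!/g_{n+1}(n+1+x)) (w_{n+1}(x,k) - w_n(x,k))`. -/
noncomputable def Δfun (n : ℕ) (x k : ℝ) : ℝ :=
  ((n + 1).factorial : ℝ) / g (n + 1) ((n : ℝ) + 1 + x) * (w (n + 1) x k - w n x k)

lemma zM_eq (l : ℝ) (t : ℝ) :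
    zMeasure l (Set.Iic t)
      = ∑' j : ℕ, volume (Set.Iic (t - j) ∩ Set.Ioo (0:ℝ) 1) * poissonMeasure l.toNNReal {j} := by
  have hmc : Measurable (Nat.cast : ℕ → ℝ) := measurable_from_top
  have h1 : (Measure.map (Nat.cast : ℕ → ℝ) (poissonMeasure l.toNNReal)).prod
      (volume.restrict (Set.Ioo (0 : ℝ) 1))
      = Measure.map (Prod.map (Nat.cast : ℕ → ℝ) id)
        ((poissonMeasure l.toNNReal).prod (volume.restrict (Set.Ioo (0 : ℝ) 1))) := by
    have h := Measure.map_prod_map (poissonMeasure l.toNNReal)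
      (volume.restrict (Set.Ioo (0 : ℝ) 1)) hmc (measurable_id (α := ℝ))
    simpa [Measure.map_id] using h
  have hadd : Measurable (fun p : ℝ × ℝ => p.1 + p.2) := measurable_fst.add measurable_snd
  rw [zMeasure, h1, Measure.map_map hadd (hmc.prodMap measurable_id)]
  have hset : (fun p : ℝ × ℝ => p.1 + p.2) ∘ Prod.map (Nat.cast : ℕ → ℝ) id ⁻¹' Set.Iic t
      = {p : ℕ × ℝ | (p.1 : ℝ) + p.2 ≤ t} := rfl
  have hms : MeasurableSet {p : ℕ × ℝ | (p.1 : ℝ) + p.2 ≤ t} :=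
    ((hmc.comp measurable_fst).add measurable_snd) measurableSet_Iic
  rw [Measure.map_apply (hadd.comp (hmc.prodMap measurable_id)) measurableSet_Iic, hset,
    Measure.prod_apply hms, lintegral_countable']
  congr 1
  ext j
  congr 1
  have : Prod.mk j ⁻¹' {p : ℕ × ℝ | (p.1 : ℝ) + p.2 ≤ t} = Set.Iic (t - j) := by
    ext y; simp only [Set.mem_preimage, Set.mem_setOf_eq, Set.mem_Iic]; constructor <;> intro h <;> linarith
  rw [this, Measure.restrict_apply measurableSet_Iic]

noncomputable def P (l : ℝ) (j : ℕ) : ℝ := Real.exp (-l) * l ^ j / j.factorial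

lemma pmf_eq (l : ℝ) (hl : 0 ≤ l) (j : ℕ) : poissonPMFReal l.toNNReal j = P l j := by
  unfold poissonPMFReal P
  rw [Real.coe_toNNReal l hl]

lemma zM_toReal (l : ℝ) (hl : 0 ≤ l) (m : ℕ) (t : ℝ) (ht1 : (m:ℝ)+1 ≤ t) (ht2 : t < (m:ℝ)+2) :
    (zMeasure l (Set.Iic t)).toReal
      = (∑ j ∈ Finset.range (m+1), P l j) + P l (m+1) * (t - (m+1)) := by
  have hsing : ∀ j : ℕ, poissonMeasure l.toNNReal {j} = ENNReal.ofReal (P l j) := by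
    intro j
    rw [poissonMeasure_singleton, ← pmf_eq l hl j]
    rfl
  rw [zM_eq]
  have hzero : ∀ j ∉ Finset.range (m+2),
      volume (Set.Iic (t - j) ∩ Set.Ioo (0:ℝ) 1) * poissonMeasure l.toNNReal {j} = 0 := by
    intro j hj
    rw [Finset.mem_range, not_lt] at hj
    have hj' : (m:ℝ) + 2 ≤ (j:ℝ) := by exact_mod_cast Nat.cast_le.mpr hj
    have : Set.Iic (t - j) ∩ Set.Ioo (0:ℝ) 1 = ∅ := by
      ext y
      simp only [Set.mem_inter_iff, Set.mem_Iic, Set.mem_Ioo, Set.mem_empty_iff_false, iff_false]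
      rintro ⟨h1, h2, _⟩; linarith
    rw [this]; simp
  rw [tsum_eq_sum hzero, Finset.sum_range_succ]
  have hfull : ∀ j ∈ Finset.range (m+1),
      volume (Set.Iic (t - j) ∩ Set.Ioo (0:ℝ) 1) * poissonMeasure l.toNNReal {j}
        = ENNReal.ofReal (P l j) := by
    intro j hj
    rw [Finset.mem_range] at hj
    have hj' : (j:ℝ) ≤ (m:ℝ) := by exact_mod_cast Nat.cast_le.mpr (Nat.lt_succ_iff.mp hj)
    have : Set.Iic (t - j) ∩ Set.Ioo (0:ℝ) 1 = Set.Ioo (0:ℝ) 1 := by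
      apply Set.inter_eq_self_of_subset_right
      intro y hy
      simp only [Set.mem_Ioo] at hy
      simp only [Set.mem_Iic]
      linarith [hy.2]
    rw [this, hsing j, Real.volume_Ioo]
    simp [one_mul]
  rw [Finset.sum_congr rfl hfull]
  have hs0 : 0 ≤ t - ((m:ℝ)+1) := by linarith
  have hlast : Set.Iic (t - (m+1:ℕ)) ∩ Set.Ioo (0:ℝ) 1 = Set.Ioc (0:ℝ) (t - ((m:ℝ)+1)) := by
    push_cast
    ext y
    simp only [Set.mem_inter_iff, Set.mem_Iic, Set.mem_Ioo, Set.mem_Ioc]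
    constructor
    · rintro ⟨h1, h2, h3⟩; exact ⟨h2, h1⟩
    · rintro ⟨h1, h2⟩; exact ⟨h2, h1, by linarith⟩
  rw [hlast, hsing (m+1), Real.volume_Ioc, sub_zero]
  rw [← ENNReal.ofReal_mul hs0]
  rw [ENNReal.toReal_add, ENNReal.toReal_sum, ENNReal.toReal_ofReal]
  · congr 1
    · exact Finset.sum_congr rfl fun j _ => ENNReal.toReal_ofReal (by
        unfold P; positivity)
    · ring
  · exact mul_nonneg hs0 (by unfold P; positivity)
  · intro j _; exact ENNReal.ofReal_ne_top
  · exact (ENNReal.sum_lt_top.mpr fun j _ => ENNReal.ofReal_lt_top).ne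
  · exact ENNReal.ofReal_ne_top

lemma contP (m : ℕ) : Continuous (fun u : ℝ => P u m) := by
  unfold P
  exact ((Real.continuous_exp.comp continuous_neg).mul (continuous_pow m)).div_const _

lemma contg (m : ℕ) : Continuous (fun u : ℝ => g m u) := by
  unfold g
  exact (Real.continuous_exp.comp continuous_neg).mul (continuous_pow m)

lemma hasDerivAt_P (j : ℕ) (l : ℝ) :
    HasDerivAt (fun l => P l (j+1)) (P l j - P l (j+1)) l := by
  have h1 : HasDerivAt (fun l : ℝ => Real.exp (-l)) (Real.exp (-l) * (-1)) l :=
    (hasDerivAt_neg l).exp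
  have h2 : HasDerivAt (fun l : ℝ => l ^ (j+1)) ((j+1 : ℕ) * l ^ j) l := by
    simpa using hasDerivAt_pow (j+1) l
  have h3 := (h1.mul h2).div_const ((j+1).factorial : ℝ)
  convert! h3 using 1
  unfold P
  have hf : ((j+1).factorial : ℝ) = ((j:ℝ)+1) * (j.factorial : ℝ) := by
    push_cast [Nat.factorial_succ]; ring
  have hj0 : (j.factorial : ℝ) ≠ 0 := by exact_mod_cast j.factorial_ne_zero
  have hj1 : ((j:ℝ)+1) ≠ 0 := by positivity
  rw [hf]
  field_simp
  push_cast
  ring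

lemma hasDerivAt_Phi (m : ℕ) (l : ℝ) :
    HasDerivAt (fun l => ∑ j ∈ Finset.range (m+1), P l j) (-(P l m)) l := by
  induction m with
  | zero =>
    have h1 : HasDerivAt (fun l : ℝ => Real.exp (-l)) (Real.exp (-l) * (-1)) l :=
      (hasDerivAt_neg l).exp
    have he : (fun l : ℝ => ∑ j ∈ Finset.range 1, P l j) = fun l : ℝ => Real.exp (-l) := by
      funext l; simp [P]
    rw [he]
    convert h1 using 1
    simp [P]
  | succ m ih =>
    simp_rw [Finset.sum_range_succ (n := m+1)]
    convert! ih.add (hasDerivAt_P m l) using 1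
    ring

lemma ftc1 (m : ℕ) (a b : ℝ) :
    ∫ u in a..b, P u m
      = (∑ j ∈ Finset.range (m+1), P a j) - (∑ j ∈ Finset.range (m+1), P b j) := by
  have h : ∀ t ∈ Set.uIcc a b,
      HasDerivAt (fun l => -∑ j ∈ Finset.range (m+1), P l j) (P t m) t := by
    intro t _
    have := (hasDerivAt_Phi m t).neg; rw [neg_neg] at this; exact this
  have hint : IntervalIntegrable (fun u => P u m) MeasureTheory.volume a b :=
    (contP m).intervalIntegrable a b
  have := intervalIntegral.integral_eq_sub_of_hasDerivAt h hint
  rw [this]; ring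

lemma ftc2 (n : ℕ) (a b : ℝ) :
    ((n:ℝ)+1) * ∫ u in a..b, g n u
      = (∫ u in a..b, g (n+1) u) - g (n+1) a + g (n+1) b := by
  have h : ∀ t ∈ Set.uIcc a b,
      HasDerivAt (fun u => -(g (n+1) u)) (g (n+1) t - ((n:ℝ)+1) * g n t) t := by
    intro t _
    have h1 : HasDerivAt (fun u : ℝ => Real.exp (-u)) (Real.exp (-t) * (-1)) t :=
      (hasDerivAt_neg t).exp
    have h2 : HasDerivAt (fun u : ℝ => u ^ (n+1)) ((n+1 : ℕ) * t ^ n) t := by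
      simpa using hasDerivAt_pow (n+1) t
    have h3 := (h1.mul h2).neg
    convert! h3 using 1
    unfold g
    push_cast
    ring
  have hint : IntervalIntegrable (fun u => g (n+1) u - ((n:ℝ)+1) * g n u)
      MeasureTheory.volume a b :=
    ((contg (n+1)).sub (continuous_const.mul (contg n))).intervalIntegrable a b
  have key := intervalIntegral.integral_eq_sub_of_hasDerivAt h hint
  rw [intervalIntegral.integral_sub ((contg (n+1)).intervalIntegrable a b)
    (show IntervalIntegrable (fun u => ((n:ℝ)+1) * g n u) MeasureTheory.volume a b from
      (continuous_const.mul (contg n)).intervalIntegrable a b),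
    intervalIntegral.integral_const_mul] at key
  linarith

lemma c_eq (n : ℕ) (x v : ℝ) (hx0 : 0 ≤ x) :
    c n v x = g (n+1) ((n:ℝ) + v + x) / g (n+1) ((n:ℝ) + 1 + x) := by
  have hb : (0:ℝ) < (n:ℝ) + 1 + x := by positivity
  unfold c g
  rw [div_pow, show -((n:ℝ) + v + x) = -((n:ℝ)+1+x) + (1 - v) by ring, Real.exp_add]
  have h1 : Real.exp (-((n:ℝ)+1+x)) ≠ 0 := Real.exp_ne_zero _
  have h2 : ((n:ℝ)+1+x) ^ (n+1) ≠ 0 := by positivity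
  field_simp

lemma int_c (n : ℕ) (x : ℝ) (hx0 : 0 ≤ x) :
    ∫ v in (0:ℝ)..1, c n v x
      = (∫ u in ((n:ℝ)+x)..((n:ℝ)+1+x), g (n+1) u) / g (n+1) ((n:ℝ)+1+x) := by
  have h1 : ∀ v : ℝ, c n v x = g (n+1) (((n:ℝ)+x) + v) / g (n+1) ((n:ℝ)+1+x) := by
    intro v
    rw [c_eq n x v hx0, show (n:ℝ) + v + x = ((n:ℝ)+x) + v by ring]
  simp_rw [h1]
  rw [intervalIntegral.integral_div]
  congr 1
  rw [intervalIntegral.integral_comp_add_left (fun u => g (n+1) u) ((n:ℝ)+x)]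
  rw [show ((n:ℝ)+x) + 0 = (n:ℝ)+x by ring, show ((n:ℝ)+x) + 1 = (n:ℝ)+1+x by ring]

lemma main_calc (k x : ℝ) (hx0 : 0 ≤ x) (n : ℕ) (hn : 1 ≤ n)
    (h1 : 2/3 ≤ x + k/((n:ℝ)+x)) (h2 : x + k/((n:ℝ)+x) < 5/3)
    (h3 : 2/3 ≤ x + k/((n:ℝ)+1+x)) (h4 : x + k/((n:ℝ)+1+x) < 5/3) :
    Δfun n x k
      = c n 0 x - (∫ v in (0 : ℝ)..1, c n v x)
        + (x - 2 / 3) * (((n : ℝ) + 1 + x) / ((n : ℝ) + 2) - c n 0 x)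
        + ((n : ℝ) + 1 + x) / ((n : ℝ) + 2) * (k / (((n:ℝ)+1) + x))
        - c n 0 x * (k / ((n:ℝ) + x)) := by
  have hn1 : (1:ℝ) ≤ (n:ℝ) := by exact_mod_cast hn
  have hna : (0:ℝ) < (n:ℝ) + x := by linarith
  have hnb : (0:ℝ) < (n:ℝ) + 1 + x := by linarith
  have hG : 0 < g (n+1) ((n:ℝ)+1+x) := by unfold g; positivity
  -- the two CDF values
  have hwn : w n x k = (∑ j ∈ Finset.range (n+1), P ((n:ℝ)+x) j)
      + P ((n:ℝ)+x) (n+1) * (x - 2/3 + k/((n:ℝ)+x)) := by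
    rw [w, zM_toReal ((n:ℝ)+x) (by linarith) n _ (by push_cast; linarith)
      (by push_cast; linarith)]
    congr 1
    push_cast
    ring
  have hwn1 : w (n+1) x k = (∑ j ∈ Finset.range (n+2), P ((n:ℝ)+1+x) j)
      + P ((n:ℝ)+1+x) (n+2) * (x - 2/3 + k/((n:ℝ)+1+x)) := by
    rw [w, zM_toReal (((n+1:ℕ):ℝ)+x) (by push_cast; linarith) (n+1) _
      (by push_cast; linarith) (by push_cast; linarith)]
    have hc : ((n+1:ℕ):ℝ) + x = (n:ℝ)+1+x := by push_cast; ring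
    rw [hc]
    congr 1
    push_cast
    ring
  -- abbreviations
  set I1 : ℝ := ∫ u in ((n:ℝ)+x)..((n:ℝ)+1+x), g n u with hI1def
  set I2 : ℝ := ∫ u in ((n:ℝ)+x)..((n:ℝ)+1+x), g (n+1) u with hI2def
  set ga : ℝ := g (n+1) ((n:ℝ)+x) with hgadef
  set gb : ℝ := g (n+1) ((n:ℝ)+1+x) with hgbdef
  set Sa : ℝ := ∑ j ∈ Finset.range (n+1), P ((n:ℝ)+x) j with hSadef
  set Sb : ℝ := ∑ j ∈ Finset.range (n+1), P ((n:ℝ)+1+x) j with hSbdef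
  -- key relations
  have hE1 : Sa - Sb = I1 / (n.factorial : ℝ) := by
    rw [hSadef, hSbdef, hI1def, ← ftc1 n ((n:ℝ)+x) ((n:ℝ)+1+x)]
    have : ∀ u : ℝ, P u n = g n u / (n.factorial : ℝ) := fun u => rfl
    simp_rw [this]
    rw [intervalIntegral.integral_div]
  have hE2 : ((n:ℝ)+1) * I1 = I2 - ga + gb := ftc2 n ((n:ℝ)+x) ((n:ℝ)+1+x)
  have hintc : (∫ v in (0:ℝ)..1, c n v x) = I2 / gb := int_c n x hx0
  have hc0 : c n 0 x = ga / gb := by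
    rw [c_eq n x 0 hx0, show (n:ℝ) + 0 + x = (n:ℝ)+x by ring]
  -- P values
  have hP1 : P ((n:ℝ)+1+x) (n+1) = gb / ((n+1).factorial : ℝ) := rfl
  have hP3 : P ((n:ℝ)+x) (n+1) = ga / ((n+1).factorial : ℝ) := rfl
  have hP2 : P ((n:ℝ)+1+x) (n+2) = gb * ((n:ℝ)+1+x) / (((n:ℝ)+2) * ((n+1).factorial : ℝ)) := by
    rw [hgbdef]
    unfold P g
    rw [pow_succ (((n:ℝ)+1+x)) (n+1)]
    have hf : ((n+2).factorial : ℝ) = ((n:ℝ)+2) * ((n+1).factorial : ℝ) := by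
      push_cast [Nat.factorial_succ (n+1)]; ring
    rw [hf]
    ring
  have hsplit : (∑ j ∈ Finset.range (n+2), P ((n:ℝ)+1+x) j) = Sb + P ((n:ℝ)+1+x) (n+1) :=
    Finset.sum_range_succ _ (n+1)
  -- nonzero facts
  have hgb0 : gb ≠ 0 := ne_of_gt hG
  have hfn : (n.factorial : ℝ) ≠ 0 := by exact_mod_cast n.factorial_ne_zero
  have hfn1 : ((n+1).factorial : ℝ) = ((n:ℝ)+1) * (n.factorial : ℝ) := by
    push_cast [Nat.factorial_succ n]; ring
  have hn2 : ((n:ℝ)+2) ≠ 0 := by positivity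
  have hn1' : ((n:ℝ)+1) ≠ 0 := by positivity
  -- assemble
  rw [Δfun, hwn, hwn1, hsplit, hP1, hP2, hP3, hintc, hc0]
  have hSb : Sb = Sa - I1 / (n.factorial : ℝ) := by linarith
  have hI1 : I1 = (I2 - ga + gb) / ((n:ℝ)+1) := by
    field_simp
    linarith
  rw [hSb, hI1, hfn1]
  have hcast : (((n:ℕ)+1:ℕ):ℝ) = (n:ℝ)+1 := by push_cast; ring
  rw [← hgbdef]
  push_cast
  field_simp
  ring

theorem lemma2_case_ii (k x : ℝ) (hx : x ∈ Set.Ico (0 : ℝ) 1) :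
    ∃ n₀ : ℕ, ∀ n : ℕ, n₀ ≤ n →
      x + r n x k ∈ Set.Ico ((2 : ℝ) / 3) (5 / 3) →
      Δfun n x k
        = c n 0 x - (∫ v in (0 : ℝ)..1, c n v x)
          + (x - 2 / 3) * (((n : ℝ) + 1 + x) / ((n : ℝ) + 2) - c n 0 x)
          + ((n : ℝ) + 1 + x) / ((n : ℝ) + 2) * r (n + 1) x k
          - c n 0 x * r n x k := by
  obtain ⟨hx0, hx1⟩ := hx
  by_cases hx23 : x < 2/3
  · refine ⟨Nat.ceil (|k| / (2/3 - x)) + 1, ?_⟩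
    intro n hn hcond
    exfalso
    simp only [r, Set.mem_Ico] at hcond
    have h23 : (0:ℝ) < 2/3 - x := by linarith
    have hn1 : 1 ≤ n := le_trans (Nat.le_add_left 1 _) hn
    have hn1' : (1:ℝ) ≤ (n:ℝ) := by exact_mod_cast hn1
    have hna : (0:ℝ) < (n:ℝ) + x := by linarith
    have hcastle : ((Nat.ceil (|k| / (2/3 - x)) + 1 : ℕ) : ℝ) ≤ (n:ℝ) := by exact_mod_cast hn
    have hq : |k| / (2/3 - x) ≤ (n:ℝ) - 1 := by
      have := Nat.le_ceil (|k| / (2/3 - x))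
      push_cast at hcastle
      linarith
    have habs : |k| ≤ (2/3 - x) * ((n:ℝ) - 1) := by
      rw [div_le_iff₀ h23] at hq
      linarith [hq]
    have hk : (2/3 - x) * ((n:ℝ) + x) ≤ k := by
      have h1 : 2/3 - x ≤ k / ((n:ℝ) + x) := by linarith [hcond.1]
      exact (le_div_iff₀ hna).mp h1
    nlinarith [le_abs_self k]
  · push_neg at hx23
    refine ⟨1, ?_⟩
    intro n hn hcond
    simp only [r, Set.mem_Ico] at hcond
    have hn1' : (1:ℝ) ≤ (n:ℝ) := by exact_mod_cast hn
    have hna : (0:ℝ) < (n:ℝ) + x := by linarith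
    have hnb : (0:ℝ) < (n:ℝ) + 1 + x := by linarith
    have h3 : 2/3 ≤ x + k/((n:ℝ)+1+x) := by
      rcases le_or_gt 0 k with hk | hk
      · have : 0 ≤ k/((n:ℝ)+1+x) := div_nonneg hk hnb.le
        linarith
      · have hmono : k/((n:ℝ)+x) ≤ k/((n:ℝ)+1+x) := by
          rw [div_le_div_iff₀ hna hnb]
          nlinarith
        linarith [hcond.1]
    have h4 : x + k/((n:ℝ)+1+x) < 5/3 := by
      rcases le_or_gt k 0 with hk | hk
      · have : k/((n:ℝ)+1+x) ≤ 0 := div_nonpos_of_nonpos_of_nonneg hk hnb.le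
        linarith
      · have hmono : k/((n:ℝ)+1+x) ≤ k/((n:ℝ)+x) := by
          rw [div_le_div_iff₀ hnb hna]
          nlinarith
        linarith [hcond.2]
    have := main_calc k x hx0 n hn hcond.1 hcond.2 h3 h4
    simpa [r] using this
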